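/- Let m₀, m₁ ≥ 1 be integers, n = m₀ + m₁, let x₁,…,xₙ > 0 be real numbers and t ∈ [0,1). For η ∈ {0,1}ⁿ with exactly m₁ entries equal to 1, set π(η) = (∏_{i : η_i = 1} x_i)/e_{m₁}(x₁,…,xₙ). Then Σ_{h=0}^{m₀−1} Σ_{j=1}^{n−m₀+h} Σ_{k=j+1}^{n} (t^h/([m₀]_t · x_k)) · Σ_η π(η) = ((Σ_{h=0}^{m₀−1} (h+1) t^h)/[m₀]_t) · e_{m₁−1}(x₁,…,xₙ)/e_{m₁}(x₁,…,xₙ), where the innermost sum runs over all η ∈ {0,1}ⁿ with exactly m₁ ones such that η_k = 1, η_j = 0, and η has exactly h entries equal to 0 among the cyclic positions k+1, k+2, …, n, 1, …, j−1. (This sum is the stationary current of the single-species t-PushTASEP across the edge from site n to site 1.) -/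

import Mathlib

/-- The elementary symmetric polynomial `e_d` evaluated on the list of reals `l`,
with the convention `e_0 = 1` and `e_d = 0` when `d` exceeds the number of variables. -/
def esymR (l : List ℝ) (d : ℕ) : ℝ := ((l.sublistsLen d).map List.prod).sum

/-- The `t`-analogue `[m]_t = 1 + t + ⋯ + t^{m-1}`. -/
def tnum (t : ℝ) (m : ℕ) : ℝ := ∑ i ∈ Finset.range m, t ^ i

open Finset

lemma esymR_list (x : ℕ → ℝ) : ∀ (l : List ℕ), l.Nodup → ∀ d,
    esymR (l.map x) d = ∑ T ∈ l.toFinset.powersetCard d, ∏ i ∈ T, x i := by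
  intro l
  induction l with
  | nil =>
    intro _ d
    cases d with
    | zero => simp [esymR]
    | succ d =>
      rw [Finset.powersetCard_eq_empty.2 (by simp)]
      simp [esymR]
  | cons a l ih =>
    intro hnd d
    have ha : a ∉ l.toFinset := by
      simp [(List.nodup_cons.1 hnd).1]
    have hnd' := (List.nodup_cons.1 hnd).2
    cases d with
    | zero => simp [esymR]
    | succ d =>
      have h1 := ih hnd' d
      have h2 := ih hnd' (d+1)
      rw [List.map_cons]
      unfold esymR at *
      rw [List.sublistsLen_succ_cons, List.map_append, List.sum_append, List.map_map,
        List.toFinset_cons, Finset.powersetCard_succ_insert ha, Finset.sum_union, Finset.sum_image]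
      · rw [h2]
        congr 1
        have : ∀ T ∈ l.toFinset.powersetCard d, ∏ i ∈ insert a T, x i = x a * ∏ i ∈ T, x i := by
          intro T hT
          rw [Finset.prod_insert]
          intro haT
          exact ha (Finset.mem_powersetCard.1 hT |>.1 haT)
        rw [Finset.sum_congr rfl this, ← Finset.mul_sum, ← h1]
        have : (List.prod ∘ List.cons (x a)) = (fun s : List ℝ => x a * s.prod) := by
          funext s; simp
        rw [this]
        simp [List.sum_map_mul_left]
      · intro T hT T' hT' hE
        have hT1 := Finset.mem_powersetCard.1 hT
        have hT1' := Finset.mem_powersetCard.1 hT'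
        have : ∀ U : Finset ℕ, U ⊆ l.toFinset → (insert a U).erase a = U := by
          intro U hU
          rw [Finset.erase_insert]
          intro hq
          exact ha (hU hq)
        rw [← this T hT1.1, ← this T' hT1'.1, hE]
      · rw [Finset.disjoint_right]
        intro T hT hT2
        obtain ⟨U, hU, rfl⟩ := Finset.mem_image.1 hT
        exact ha ((Finset.mem_powersetCard.1 hT2).1 (Finset.mem_insert_self a U))

lemma esymR_eq (n : ℕ) (x : ℕ → ℝ) (d : ℕ) :
    esymR ((List.range' 1 n).map x) d = ∑ T ∈ (Finset.Icc 1 n).powersetCard d, ∏ i ∈ T, x i := by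
  rw [esymR_list x _ (List.nodup_range' 1 (by simp)) d]
  congr 2
  ext i
  simp [List.mem_range'_1]
  omega

abbrev Cnd (n m₁ h : ℕ) (T : Finset ℕ) (j k : ℕ) : Prop :=
  (insert k T).card = m₁ ∧ k ∈ insert k T ∧ j ∉ insert k T ∧
    ((Finset.Icc (k + 1) n ∪ Finset.Ico 1 j).filter (fun i => i ∉ insert k T)).card = h

lemma count_pairs (m₀ m₁ n h : ℕ) (hm₁ : 1 ≤ m₁) (hn : n = m₀ + m₁) (hh : h < m₀)
    (T : Finset ℕ) (hT : T ⊆ Finset.Icc 1 n) (hTc : T.card = m₁ - 1) :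
    (((Finset.Icc 1 (n - m₀ + h)) ×ˢ (Finset.Icc 1 n)).filter
      (fun p => p.1 + 1 ≤ p.2 ∧ Cnd n m₁ h T p.1 p.2)).card = h + 1 := by
  classical
  have hC : (Finset.Icc 1 n \ T).card = m₀ + 1 := by
    rw [Finset.card_sdiff_of_subset hT, Nat.card_Icc, hTc]; omega
  set C := Finset.Icc 1 n \ T with hCdef
  have hmemC : ∀ c, c ∈ C ↔ 1 ≤ c ∧ c ≤ n ∧ c ∉ T := by
    intro c
    rw [hCdef, Finset.mem_sdiff, Finset.mem_Icc]
    tauto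
  set e := C.orderEmbOfFin hC with he
  have hemem : ∀ b, e b ∈ C := fun b => C.orderEmbOfFin_mem hC b
  have hesurj : ∀ c ∈ C, ∃ b, e b = c := by
    intro c hc
    have hr := C.range_orderEmbOfFin hC
    have : c ∈ Set.range (e : Fin (m₀+1) → ℕ) := by rw [hr]; exact_mod_cast hc
    exact this
  have hrank : ∀ b : Fin (m₀ + 1), (C.filter (fun c => c ≤ e b)).card = (b : ℕ) + 1 := by
    intro b
    have himg : C.filter (fun c => c ≤ e b) = (Finset.Iic b).image (fun i => e i) := by
      ext c
      simp only [Finset.mem_filter, Finset.mem_image, Finset.mem_Iic]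
      constructor
      · rintro ⟨hc, hle⟩
        obtain ⟨b', rfl⟩ := hesurj c hc
        exact ⟨b', e.le_iff_le.1 hle, rfl⟩
      · rintro ⟨b', hb', rfl⟩
        exact ⟨hemem b', e.le_iff_le.2 hb'⟩
    rw [himg, Finset.card_image_of_injective _ e.injective, Fin.card_Iic]
  -- upper bound for elements by rank
  have hub : ∀ b : Fin (m₀ + 1), e b + (m₀ - (b : ℕ)) ≤ n := by
    intro b
    have hρ := hrank b
    have hsplit := Finset.card_filter_add_card_filter_not (s := C)
      (p := fun c => c ≤ e b)
    have hsub : C.filter (fun c => ¬ c ≤ e b) ⊆ Finset.Icc (e b + 1) n := by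
      intro c hc
      rw [Finset.mem_filter] at hc
      obtain ⟨hc1, hc2⟩ := hc
      rw [hmemC] at hc1
      rw [Finset.mem_Icc]
      omega
    have hcard2 := Finset.card_le_card hsub
    rw [Nat.card_Icc] at hcard2
    have hbn : e b ≤ n := ((hmemC (e b)).1 (hemem b)).2.1
    rw [hρ, hC] at hsplit
    omega
  -- arc count formula
  have harc : ∀ j k : ℕ, j ∈ C → k ∈ C → j < k →
      ((Finset.Icc (k + 1) n ∪ Finset.Ico 1 j).filter (fun i => i ∉ insert k T)).card
        = (m₀ + 1 - (C.filter (fun c => c ≤ k)).card)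
          + ((C.filter (fun c => c ≤ j)).card - 1) := by
    intro j k hj hk hjk
    have hjC := (hmemC j).1 hj
    have hkC := (hmemC k).1 hk
    have h1 : (Finset.Icc (k + 1) n).filter (fun i => i ∉ insert k T)
        = C.filter (fun c => k < c) := by
      ext i
      simp only [Finset.mem_filter, Finset.mem_Icc, Finset.mem_insert, not_or, hmemC]
      constructor
      · rintro ⟨⟨hik, hin⟩, hne, hiT⟩
        exact ⟨⟨by omega, hin, hiT⟩, by omega⟩
      · rintro ⟨⟨ha1, ha2, ha3⟩, ha4⟩
        exact ⟨⟨by omega, ha2⟩, by omega, ha3⟩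
    have h2 : (Finset.Ico 1 j).filter (fun i => i ∉ insert k T)
        = C.filter (fun c => c < j) := by
      ext i
      simp only [Finset.mem_filter, Finset.mem_Ico, Finset.mem_insert, not_or, hmemC]
      constructor
      · rintro ⟨⟨hik, hin⟩, hne, hiT⟩
        exact ⟨⟨by omega, by omega, hiT⟩, by omega⟩
      · rintro ⟨⟨ha1, ha2, ha3⟩, ha4⟩
        exact ⟨⟨by omega, by omega⟩, by omega, ha3⟩
    have hdisj : Disjoint (C.filter (fun c => k < c)) (C.filter (fun c => c < j)) := by
      rw [Finset.disjoint_left]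
      rintro a ha1 ha2
      rw [Finset.mem_filter] at ha1 ha2
      omega
    rw [Finset.filter_union, h1, h2, Finset.card_union_of_disjoint hdisj]
    have e1 : (C.filter (fun c => k < c)).card
        = m₀ + 1 - (C.filter (fun c => c ≤ k)).card := by
      have hsplit := Finset.card_filter_add_card_filter_not (s := C)
        (p := fun c => c ≤ k)
      have hcongr : C.filter (fun c => ¬ c ≤ k) = C.filter (fun c => k < c) := by
        apply Finset.filter_congr
        intro c _
        simp [Nat.not_le]
      rw [hcongr, hC] at hsplit
      omega
    have e2 : (C.filter (fun c => c ≤ j)).card = (C.filter (fun c => c < j)).card + 1 := by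
      have hins : C.filter (fun c => c ≤ j) = insert j (C.filter (fun c => c < j)) := by
        ext c
        simp only [Finset.mem_filter, Finset.mem_insert]
        constructor
        · rintro ⟨hc, hcj⟩
          rcases eq_or_lt_of_le hcj with h | h
          · exact Or.inl h
          · exact Or.inr ⟨hc, h⟩
        · rintro (rfl | ⟨hc, hcj⟩)
          · exact ⟨hj, le_refl _⟩
          · exact ⟨hc, le_of_lt hcj⟩
      rw [hins, Finset.card_insert_of_notMem (by simp)]
    omega
  -- the bijection
  have key := Finset.card_bij
    (s := Finset.range (h + 1))
    (t := ((Finset.Icc 1 (n - m₀ + h)) ×ˢ (Finset.Icc 1 n)).filter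
      (fun p => p.1 + 1 ≤ p.2 ∧ Cnd n m₁ h T p.1 p.2))
    (fun a ha => ((e ⟨a, by have := Finset.mem_range.1 ha; omega⟩ : ℕ),
      (e ⟨a + (m₀ - h), by have := Finset.mem_range.1 ha; omega⟩ : ℕ)))
    (by
      intro a ha
      have hah := Finset.mem_range.1 ha
      have main : ∀ bj bk : Fin (m₀ + 1), (bj : ℕ) = a → (bk : ℕ) = a + (m₀ - h) →
          ((e bj : ℕ), (e bk : ℕ)) ∈ ((Finset.Icc 1 (n - m₀ + h)) ×ˢ (Finset.Icc 1 n)).filter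
            (fun p => p.1 + 1 ≤ p.2 ∧ Cnd n m₁ h T p.1 p.2) := by
        intro bj bk hbja hbka
        have hjmem := (hmemC (e bj)).1 (hemem bj)
        have hkmem := (hmemC (e bk)).1 (hemem bk)
        have hlt : e bj < e bk := e.strictMono (by rw [Fin.lt_def]; omega)
        have hkT : e bk ∉ T := hkmem.2.2
        have hubj := hub bj
        rw [Finset.mem_filter, Finset.mem_product]
        refine ⟨⟨Finset.mem_Icc.2 ⟨hjmem.1, by omega⟩,
          Finset.mem_Icc.2 ⟨hkmem.1, hkmem.2.1⟩⟩,
          by omega, ?_, Finset.mem_insert_self _ _, ?_, ?_⟩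
        · rw [Finset.card_insert_of_notMem hkT, hTc]; omega
        · simp only [Finset.mem_insert, not_or]
          exact ⟨by omega, hjmem.2.2⟩
        · rw [harc _ _ (hemem bj) (hemem bk) hlt, hrank, hrank]
          omega
      exact main _ _ rfl rfl)
    (by
      intro a1 ha1 a2 ha2 hEq
      have h1 := congrArg Prod.fst hEq
      simp only at h1
      have := e.injective h1
      simpa using congrArg Fin.val this)
    (by
      rintro ⟨j, k⟩ hp
      rw [Finset.mem_filter, Finset.mem_product] at hp
      obtain ⟨⟨hjmem, hkmem⟩, hjk, hc1, _, hc3, hc4⟩ := hp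
      rw [Finset.mem_Icc] at hjmem hkmem
      have hkT : k ∉ T := by
        intro hk
        rw [Finset.insert_eq_self.2 hk] at hc1
        omega
      have hjT : j ∉ T ∧ j ≠ k := by
        simp only [Finset.mem_insert, not_or] at hc3
        tauto
      have hjC : j ∈ C := (hmemC j).2 ⟨hjmem.1, by omega, hjT.1⟩
      have hkC : k ∈ C := (hmemC k).2 ⟨hkmem.1, hkmem.2, hkT⟩
      obtain ⟨bj, hbj⟩ := hesurj j hjC
      obtain ⟨bk, hbk⟩ := hesurj k hkC
      have hbjk : (bj : ℕ) < (bk : ℕ) := by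
        have : e bj < e bk := by omega
        exact e.strictMono.lt_iff_lt.1 this
      rw [harc j k hjC hkC (by omega)] at hc4
      rw [← hbj, ← hbk, hrank, hrank] at hc4
      have hbk_lt := bk.isLt
      have hbj_le : (bj : ℕ) < h + 1 := by omega
      refine ⟨(bj : ℕ), Finset.mem_range.2 hbj_le, ?_⟩
      have e1 : (⟨(bj : ℕ), by omega⟩ : Fin (m₀ + 1)) = bj := Fin.ext rfl
      have e2 : (⟨(bj : ℕ) + (m₀ - h), by omega⟩ : Fin (m₀ + 1)) = bk := Fin.ext (by
        simp only
        omega)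
      simp only [e1, e2, hbj, hbk])
  rw [Finset.card_range] at key
  omega


/-- The current of the single-species `t`-PushTASEP across the edge from site `n` to
site `1` (Theorem 1.5 of the paper).  Configurations `η ∈ {0,1}ⁿ` with `m₁` ones are
encoded by the set `S ⊆ {1,…,n}` of sites `i` with `η_i = 1`, and
`π(S) = (∏_{i∈S} x_i)/e_{m₁}(x₁,…,xₙ)` is the stationary probability of `S`. -/
theorem stmt_1 (m₀ m₁ n : ℕ) (hm₀ : 1 ≤ m₀) (hm₁ : 1 ≤ m₁) (hn : n = m₀ + m₁)
    (x : ℕ → ℝ) (hx : ∀ i ∈ Finset.Icc 1 n, 0 < x i)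
    (t : ℝ) (ht0 : 0 ≤ t) (ht1 : t < 1) :
    (∑ h ∈ Finset.range m₀, ∑ j ∈ Finset.Icc 1 (n - m₀ + h), ∑ k ∈ Finset.Icc (j + 1) n,
      (t ^ h / (tnum t m₀ * x k)) *
        ∑ S ∈ (Finset.Icc 1 n).powerset.filter (fun S =>
            S.card = m₁ ∧ k ∈ S ∧ j ∉ S ∧
            ((Finset.Icc (k + 1) n ∪ Finset.Ico 1 j).filter (fun i => i ∉ S)).card = h),
          (∏ i ∈ S, x i) / esymR ((List.range' 1 n).map x) m₁)
    = ((∑ h ∈ Finset.range m₀, ((h : ℝ) + 1) * t ^ h) / tnum t m₀) *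
        (esymR ((List.range' 1 n).map x) (m₁ - 1) / esymR ((List.range' 1 n).map x) m₁) := by
  classical
  rw [esymR_eq n x m₁, esymR_eq n x (m₁ - 1)]
  set E := ∑ T ∈ (Finset.Icc 1 n).powersetCard m₁, ∏ i ∈ T, x i with hE
  set E' := ∑ T ∈ (Finset.Icc 1 n).powersetCard (m₁ - 1), ∏ i ∈ T, x i with hE'
  rw [Finset.sum_div, Finset.sum_mul]
  apply Finset.sum_congr rfl
  intro h hh
  rw [Finset.mem_range] at hh
  -- the key combinatorial identity
  have key : ∑ j ∈ Finset.Icc 1 (n - m₀ + h), ∑ k ∈ Finset.Icc (j + 1) n,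
      ∑ S ∈ (Finset.Icc 1 n).powerset.filter (fun S =>
          S.card = m₁ ∧ k ∈ S ∧ j ∉ S ∧
          ((Finset.Icc (k + 1) n ∪ Finset.Ico 1 j).filter (fun i => i ∉ S)).card = h),
        ∏ i ∈ S.erase k, x i
      = ((h : ℝ) + 1) * E' := by
    have step1 : ∀ j ∈ Finset.Icc 1 (n - m₀ + h), ∀ k ∈ Finset.Icc (j + 1) n,
        (∑ S ∈ (Finset.Icc 1 n).powerset.filter (fun S =>
            S.card = m₁ ∧ k ∈ S ∧ j ∉ S ∧
            ((Finset.Icc (k + 1) n ∪ Finset.Ico 1 j).filter (fun i => i ∉ S)).card = h),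
          ∏ i ∈ S.erase k, x i)
        = ∑ T ∈ (Finset.Icc 1 n).powersetCard (m₁ - 1),
            if Cnd n m₁ h T j k then ∏ i ∈ T, x i else 0 := by
      intro j hj k hk
      rw [Finset.mem_Icc] at hj hk
      rw [← Finset.sum_filter]
      apply Finset.sum_nbij' (i := fun S => S.erase k) (j := fun T => insert k T)
      · intro S hS
        rw [Finset.mem_filter, Finset.mem_powerset] at hS
        obtain ⟨hS1, hS2, hS3, hS4, hS5⟩ := hS
        have hins : insert k (S.erase k) = S := Finset.insert_erase hS3
        rw [Finset.mem_filter, Finset.mem_powersetCard]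
        refine ⟨⟨(Finset.erase_subset _ _).trans hS1, ?_⟩, ?_⟩
        · rw [Finset.card_erase_of_mem hS3, hS2]
        · refine ⟨?_, ?_, ?_, ?_⟩ <;> rw [hins]
          · exact hS2
          · exact hS3
          · exact hS4
          · exact hS5
      · intro T hT
        rw [Finset.mem_filter, Finset.mem_powersetCard] at hT
        obtain ⟨⟨hT1, hT2⟩, hc1, hc2, hc3, hc4⟩ := hT
        have hk' : k ∈ Finset.Icc 1 n := Finset.mem_Icc.2 ⟨by omega, hk.2⟩
        rw [Finset.mem_filter, Finset.mem_powerset]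
        exact ⟨Finset.insert_subset hk' hT1, hc1, hc2, hc3, hc4⟩
      · intro S hS
        rw [Finset.mem_filter] at hS
        exact Finset.insert_erase hS.2.2.1
      · intro T hT
        rw [Finset.mem_filter, Finset.mem_powersetCard] at hT
        obtain ⟨⟨hT1, hT2⟩, hc1, hc2, hc3, hc4⟩ := hT
        have hkT : k ∉ T := by
          intro hkT
          rw [Finset.insert_eq_self.2 hkT] at hc1
          omega
        exact Finset.erase_insert hkT
      · intro S hS
        rfl
    calc ∑ j ∈ Finset.Icc 1 (n - m₀ + h), ∑ k ∈ Finset.Icc (j + 1) n,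
          ∑ S ∈ (Finset.Icc 1 n).powerset.filter (fun S =>
              S.card = m₁ ∧ k ∈ S ∧ j ∉ S ∧
              ((Finset.Icc (k + 1) n ∪ Finset.Ico 1 j).filter (fun i => i ∉ S)).card = h),
            ∏ i ∈ S.erase k, x i
        = ∑ j ∈ Finset.Icc 1 (n - m₀ + h), ∑ k ∈ Finset.Icc 1 n,
            ∑ T ∈ (Finset.Icc 1 n).powersetCard (m₁ - 1),
              if j + 1 ≤ k ∧ Cnd n m₁ h T j k then ∏ i ∈ T, x i else 0 := by
          apply Finset.sum_congr rfl
          intro j hj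
          rw [Finset.sum_congr rfl (fun k hk => step1 j hj k hk)]
          have hIcc : Finset.Icc (j + 1) n = (Finset.Icc 1 n).filter (fun k => j + 1 ≤ k) := by
            ext k
            simp only [Finset.mem_Icc, Finset.mem_filter]
            omega
          rw [hIcc, Finset.sum_filter]
          apply Finset.sum_congr rfl
          intro k hk
          split_ifs with hjk
          · apply Finset.sum_congr rfl
            intro T hT
            simp [hjk]
          · symm
            apply Finset.sum_eq_zero
            intro T hT
            simp [hjk]
      _ = ∑ T ∈ (Finset.Icc 1 n).powersetCard (m₁ - 1),
            ∑ j ∈ Finset.Icc 1 (n - m₀ + h), ∑ k ∈ Finset.Icc 1 n,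
              if j + 1 ≤ k ∧ Cnd n m₁ h T j k then ∏ i ∈ T, x i else 0 := by
          rw [Finset.sum_congr rfl (fun j _ => Finset.sum_comm)]
          exact Finset.sum_comm
      _ = ∑ T ∈ (Finset.Icc 1 n).powersetCard (m₁ - 1), ((h : ℝ) + 1) * ∏ i ∈ T, x i := by
          apply Finset.sum_congr rfl
          intro T hT
          rw [Finset.mem_powersetCard] at hT
          rw [← Finset.sum_product']
          rw [← Finset.sum_filter, Finset.sum_const, nsmul_eq_mul]
          rw [count_pairs m₀ m₁ n h hm₁ hn hh T hT.1 hT.2]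
          push_cast
          ring
      _ = ((h : ℝ) + 1) * E' := by rw [← Finset.mul_sum]
  -- analytic reduction
  have hstep : ∀ j ∈ Finset.Icc 1 (n - m₀ + h), ∀ k ∈ Finset.Icc (j + 1) n,
      (t ^ h / (tnum t m₀ * x k)) *
        ∑ S ∈ (Finset.Icc 1 n).powerset.filter (fun S =>
            S.card = m₁ ∧ k ∈ S ∧ j ∉ S ∧
            ((Finset.Icc (k + 1) n ∪ Finset.Ico 1 j).filter (fun i => i ∉ S)).card = h),
          (∏ i ∈ S, x i) / E
      = (t ^ h / (tnum t m₀ * E)) *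
        ∑ S ∈ (Finset.Icc 1 n).powerset.filter (fun S =>
            S.card = m₁ ∧ k ∈ S ∧ j ∉ S ∧
            ((Finset.Icc (k + 1) n ∪ Finset.Ico 1 j).filter (fun i => i ∉ S)).card = h),
          ∏ i ∈ S.erase k, x i := by
    intro j hj k hk
    rw [Finset.mem_Icc] at hj hk
    have hxk : x k ≠ 0 := (hx k (Finset.mem_Icc.2 ⟨by omega, hk.2⟩)).ne'
    rw [← Finset.sum_div]
    have hsum : (∑ S ∈ (Finset.Icc 1 n).powerset.filter (fun S =>
        S.card = m₁ ∧ k ∈ S ∧ j ∉ S ∧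
        ((Finset.Icc (k + 1) n ∪ Finset.Ico 1 j).filter (fun i => i ∉ S)).card = h),
        ∏ i ∈ S, x i)
        = x k * ∑ S ∈ (Finset.Icc 1 n).powerset.filter (fun S =>
            S.card = m₁ ∧ k ∈ S ∧ j ∉ S ∧
            ((Finset.Icc (k + 1) n ∪ Finset.Ico 1 j).filter (fun i => i ∉ S)).card = h),
          ∏ i ∈ S.erase k, x i := by
      rw [Finset.mul_sum]
      apply Finset.sum_congr rfl
      intro S hS
      rw [Finset.mem_filter] at hS
      exact (Finset.mul_prod_erase S x hS.2.2.1).symm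
    rw [hsum]
    have hgen : ∀ A : ℝ, t ^ h / (tnum t m₀ * x k) * ((x k * A) / E)
        = (x k / x k) * (t ^ h / (tnum t m₀ * E) * A) := by
      intro A; ring
    rw [hgen, div_self hxk, one_mul]
  rw [Finset.sum_congr rfl (fun j hj => Finset.sum_congr rfl (fun k hk => hstep j hj k hk))]
  rw [Finset.sum_congr rfl (fun j _ => (Finset.mul_sum _ _ _).symm), ← Finset.mul_sum, key]
  ring
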